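/- Social cost difference identity: for the planner actions y* and y† = y* + ε(u_{d'} − u_{d†}) with d' > d†, the social cost satisfies SC(y*) − SC(y†) = τ·(e(y*) − e(y†))·Σ_d d·(y*_d·L_P + (m_d − y*_d)·L_U) + ε·τ·(d' − d†)·e(y†)·ΔL. In particular, if e(y†) < e(y*), ΔL > 0, τ > 0, L_P > 0, then SC(y†) < SC(y*). -/

import Mathlib

open Finset

/-- `𝒟 = {1, …, D_max}`. -/
def Dset (Dmax : ℕ) : Finset ℕ := Finset.Icc 1 Dmax

/-- Weighted degree distribution `w_d = d·m_d / ∑ d'·m_{d'}`. -/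
noncomputable def wgt (Dmax : ℕ) (m : ℕ → ℝ) (d : ℕ) : ℝ :=
  (d : ℝ) * m d / ∑ d' ∈ Dset Dmax, (d' : ℝ) * m d'

/-- `γ(y) = β_IA · ∑_d w_d (p_U − (y_d/m_d)·Δp)` where `Δp = p_U − p_P`. -/
noncomputable def gam (Dmax : ℕ) (m : ℕ → ℝ) (pP pU βIA : ℝ) (y : ℕ → ℝ) : ℝ :=
  βIA * ∑ d ∈ Dset Dmax, wgt Dmax m d * (pU - (y d / m d) * (pU - pP))

/-- `λ(y) = β_IA · ∑_d w_d (d−1) (p_U − (y_d/m_d)·Δp)`. -/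
noncomputable def lamb (Dmax : ℕ) (m : ℕ → ℝ) (pP pU βIA : ℝ) (y : ℕ → ℝ) : ℝ :=
  βIA * ∑ d ∈ Dset Dmax, wgt Dmax m d * ((d : ℝ) - 1) * (pU - (y d / m d) * (pU - pP))

/-- Risk exposure `e(y) = γ(y) · ∑_{k=1}^{K} λ(y)^{k−1}`. -/
noncomputable def expo (Dmax : ℕ) (m : ℕ → ℝ) (pP pU βIA : ℝ) (K : ℕ)
    (y : ℕ → ℝ) : ℝ :=
  gam Dmax m pP pU βIA y * ∑ k ∈ Finset.range K, lamb Dmax m pP pU βIA y ^ k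

/-- Social cost
`SC(y) = ∑_d [ y_d·C_{d,P}(X(y)) + (m_d − y_d)·C_{d,N}(X(y)) ]` with
`C_{d,P} = τ(1 + d·e(y))L_P + c_P` and `C_{d,N} = τ(1 + d·e(y))L_U`. -/
noncomputable def SC (Dmax : ℕ) (m : ℕ → ℝ) (pP pU βIA τ LP LU cP : ℝ) (K : ℕ)
    (y : ℕ → ℝ) : ℝ :=
  ∑ d ∈ Dset Dmax,
    (y d * (τ * (1 + (d : ℝ) * expo Dmax m pP pU βIA K y) * LP + cP)
      + (m d - y d) * (τ * (1 + (d : ℝ) * expo Dmax m pP pU βIA K y) * LU))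

/-- Admissible social planner action: `y_d ∈ [0, m_d]` for each `d ∈ 𝒟`. -/
def isPlan (Dmax : ℕ) (m : ℕ → ℝ) (y : ℕ → ℝ) : Prop :=
  ∀ d ∈ Dset Dmax, 0 ≤ y d ∧ y d ≤ m d


lemma SC_expand_aux (s : Finset ℕ) (m : ℕ → ℝ) (τ LP LU cP e : ℝ) (y : ℕ → ℝ) :
    ∑ d ∈ s,
      (y d * (τ * (1 + (d : ℝ) * e) * LP + cP)
        + (m d - y d) * (τ * (1 + (d : ℝ) * e) * LU))
      = cP * ∑ d ∈ s, y d
        + τ * ∑ d ∈ s, (y d * LP + (m d - y d) * LU)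
        + τ * e * ∑ d ∈ s, (d : ℝ) * (y d * LP + (m d - y d) * LU) := by
  rw [Finset.mul_sum, Finset.mul_sum, Finset.mul_sum, ← Finset.sum_add_distrib,
    ← Finset.sum_add_distrib]
  exact Finset.sum_congr rfl (fun d _ => by ring)

lemma key_aux (s : Finset ℕ) (g : ℕ → ℝ) (ddag d' : ℕ) (hd' : d' ∈ s) (hddag : ddag ∈ s) :
    ∑ d ∈ s, g d * ((if d = d' then (1:ℝ) else 0) - (if d = ddag then 1 else 0))
      = g d' - g ddag := by
  simp only [mul_sub, mul_ite, mul_one, mul_zero, Finset.sum_sub_distrib,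
    Finset.sum_ite_eq', hd', hddag, if_true]

/-- social cost difference identity for the perturbation
`y† = y* + ε(u_{d'} − u_{d†})` with `d' > d†`:
`SC(y*) − SC(y†) = τ·(e(y*) − e(y†))·∑_d d·(y*_d·L_P + (m_d − y*_d)·L_U)
  + ε·τ·(d' − d†)·e(y†)·ΔL`,
and consequently `SC(y†) < SC(y*)` whenever `e(y†) < e(y*)`. -/
theorem planner_social_cost_difference (Dmax : ℕ) (hD : 1 ≤ Dmax)
    (m : ℕ → ℝ) (hm : ∀ d ∈ Dset Dmax, 0 < m d)
    (pP pU βIA τ LP LU cP : ℝ) (K : ℕ)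
    (hpP : 0 ≤ pP) (hp : pP < pU) (hpU : pU ≤ 1)
    (hβ0 : 0 < βIA) (hβ1 : βIA ≤ 1) (hK : 1 ≤ K)
    (hτ0 : 0 < τ) (hτ1 : τ ≤ 1) (hLP : 0 < LP) (hL : LP < LU) (hcP : 0 < cP)
    (ystar : ℕ → ℝ) (hplan : isPlan Dmax m ystar)
    (ddag d' : ℕ) (hddag : ddag ∈ Dset Dmax) (hd' : d' ∈ Dset Dmax)
    (hlt : ddag < d')
    (ε : ℝ) (hε0 : 0 < ε) (hε : ε < min (ystar ddag) (m d' - ystar d'))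
    (ydag : ℕ → ℝ)
    (hydag : ydag = fun d => ystar d
      + ε * ((if d = d' then 1 else 0) - (if d = ddag then 1 else 0))) :
    SC Dmax m pP pU βIA τ LP LU cP K ystar - SC Dmax m pP pU βIA τ LP LU cP K ydag
      = τ * (expo Dmax m pP pU βIA K ystar - expo Dmax m pP pU βIA K ydag) *
          (∑ d ∈ Dset Dmax, (d : ℝ) * (ystar d * LP + (m d - ystar d) * LU))
        + ε * τ * ((d' : ℝ) - (ddag : ℝ)) * expo Dmax m pP pU βIA K ydag * (LU - LP) ∧
    (expo Dmax m pP pU βIA K ydag < expo Dmax m pP pU βIA K ystar →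
      SC Dmax m pP pU βIA τ LP LU cP K ydag < SC Dmax m pP pU βIA τ LP LU cP K ystar) := by
  
  have hne : ddag ≠ d' := Nat.ne_of_lt hlt
  have hεd : ε < ystar ddag := lt_of_lt_of_le hε (min_le_left _ _)
  have hεd' : ε < m d' - ystar d' := lt_of_lt_of_le hε (min_le_right _ _)
  -- ydag pointwise
  have hyd : ∀ d, ydag d = ystar d
      + ε * ((if d = d' then 1 else 0) - (if d = ddag then 1 else 0)) := by
    intro d; rw [hydag]
  -- ydag is admissible
  have hplan2 : isPlan Dmax m ydag := by
    intro d hd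
    obtain ⟨h0, h1⟩ := hplan d hd
    rw [hyd d]
    by_cases hA : d = d'
    · subst hA
      have hx : ¬ d = ddag := fun h => hne h.symm
      simp only [if_pos rfl, if_neg hx, if_true, sub_zero, mul_one]
      constructor <;> linarith
    · by_cases hB : d = ddag
      · subst hB
        simp only [if_neg hA, if_pos rfl, if_true, zero_sub, mul_neg, mul_one]
        constructor <;> linarith
      · simp only [if_neg hA, if_neg hB, sub_zero, mul_zero]
        constructor <;> linarith
  -- the three sum identities
  have hsum1 : ∑ d ∈ Dset Dmax, ydag d = ∑ d ∈ Dset Dmax, ystar d := by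
    have : ∑ d ∈ Dset Dmax, ydag d
        = ∑ d ∈ Dset Dmax, ystar d
          + ∑ d ∈ Dset Dmax, (fun _ => ε) d *
              ((if d = d' then (1:ℝ) else 0) - (if d = ddag then 1 else 0)) := by
      rw [← Finset.sum_add_distrib]
      exact Finset.sum_congr rfl (fun d _ => by rw [hyd d])
    rw [this, key_aux _ _ _ _ hd' hddag]; ring
  have hsum2 : ∑ d ∈ Dset Dmax, (ydag d * LP + (m d - ydag d) * LU)
      = ∑ d ∈ Dset Dmax, (ystar d * LP + (m d - ystar d) * LU) := by
    have : ∑ d ∈ Dset Dmax, (ydag d * LP + (m d - ydag d) * LU)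
        = ∑ d ∈ Dset Dmax, ((ystar d * LP + (m d - ystar d) * LU)
          + (fun _ => ε * (LP - LU)) d *
              ((if d = d' then (1:ℝ) else 0) - (if d = ddag then 1 else 0))) := by
      refine Finset.sum_congr rfl (fun d _ => ?_)
      rw [hyd d]; ring
    rw [this, Finset.sum_add_distrib, key_aux _ _ _ _ hd' hddag]; ring
  have hsum3 : ∑ d ∈ Dset Dmax, (d : ℝ) * (ydag d * LP + (m d - ydag d) * LU)
      = ∑ d ∈ Dset Dmax, (d : ℝ) * (ystar d * LP + (m d - ystar d) * LU)
        - ε * ((d' : ℝ) - (ddag : ℝ)) * (LU - LP) := by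
    have : ∑ d ∈ Dset Dmax, (d : ℝ) * (ydag d * LP + (m d - ydag d) * LU)
        = ∑ d ∈ Dset Dmax, ((d : ℝ) * (ystar d * LP + (m d - ystar d) * LU)
          + (fun d => (d : ℝ) * ε * (LP - LU)) d *
              ((if d = d' then (1:ℝ) else 0) - (if d = ddag then 1 else 0))) := by
      refine Finset.sum_congr rfl (fun d _ => ?_)
      rw [hyd d]; ring
    rw [this, Finset.sum_add_distrib, key_aux _ _ _ _ hd' hddag]; ring
  -- the identity
  have hiden : SC Dmax m pP pU βIA τ LP LU cP K ystar
      - SC Dmax m pP pU βIA τ LP LU cP K ydag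
      = τ * (expo Dmax m pP pU βIA K ystar - expo Dmax m pP pU βIA K ydag) *
          (∑ d ∈ Dset Dmax, (d : ℝ) * (ystar d * LP + (m d - ystar d) * LU))
        + ε * τ * ((d' : ℝ) - (ddag : ℝ)) * expo Dmax m pP pU βIA K ydag * (LU - LP) := by
    unfold SC
    rw [SC_expand_aux, SC_expand_aux, hsum1, hsum2, hsum3]
    ring
  refine ⟨hiden, fun hee => ?_⟩
  -- positivity ingredients
  have hW : 0 < ∑ d ∈ Dset Dmax, (d : ℝ) * m d := by
    refine Finset.sum_pos (fun d hd => ?_) ⟨1, by simp [Dset, hD]⟩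
    have hd1 : 1 ≤ d := (Finset.mem_Icc.mp hd).1
    have : (0:ℝ) < (d:ℝ) := by exact_mod_cast Nat.pos_of_ne_zero (by omega)
    exact mul_pos this (hm d hd)
  have hterm : ∀ d ∈ Dset Dmax, 0 ≤ pU - (ydag d / m d) * (pU - pP) := by
    intro d hd
    obtain ⟨h0, h1⟩ := hplan2 d hd
    have hmd := hm d hd
    have hr1 : ydag d / m d ≤ 1 := (div_le_one hmd).mpr h1
    have hr0 : 0 ≤ ydag d / m d := div_nonneg h0 hmd.le
    nlinarith
  have hwgt : ∀ d ∈ Dset Dmax, 0 ≤ wgt Dmax m d := by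
    intro d hd
    have hd1 : 1 ≤ d := (Finset.mem_Icc.mp hd).1
    have hdpos : (0:ℝ) ≤ (d:ℝ) := Nat.cast_nonneg d
    exact div_nonneg (mul_nonneg hdpos (hm d hd).le) hW.le
  have hg : 0 ≤ gam Dmax m pP pU βIA ydag := by
    unfold gam
    refine mul_nonneg hβ0.le (Finset.sum_nonneg fun d hd => ?_)
    exact mul_nonneg (hwgt d hd) (hterm d hd)
  have hl : 0 ≤ lamb Dmax m pP pU βIA ydag := by
    unfold lamb
    refine mul_nonneg hβ0.le (Finset.sum_nonneg fun d hd => ?_)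
    have hd1 : 1 ≤ d := (Finset.mem_Icc.mp hd).1
    have : (0:ℝ) ≤ (d:ℝ) - 1 := by
      have : (1:ℝ) ≤ (d:ℝ) := by exact_mod_cast hd1
      linarith
    exact mul_nonneg (mul_nonneg (hwgt d hd) this) (hterm d hd)
  have he2 : 0 ≤ expo Dmax m pP pU βIA K ydag := by
    unfold expo
    exact mul_nonneg hg (Finset.sum_nonneg fun k _ => pow_nonneg hl k)
  have hS : 0 < ∑ d ∈ Dset Dmax, (d : ℝ) * (ystar d * LP + (m d - ystar d) * LU) := by
    refine Finset.sum_pos (fun d hd => ?_) ⟨1, by simp [Dset, hD]⟩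
    have hd1 : 1 ≤ d := (Finset.mem_Icc.mp hd).1
    have hdpos : (0:ℝ) < (d:ℝ) := by exact_mod_cast Nat.pos_of_ne_zero (by omega)
    obtain ⟨h0, h1⟩ := hplan d hd
    have hmd := hm d hd
    refine mul_pos hdpos ?_
    nlinarith
  have hdd : (0:ℝ) < (d' : ℝ) - (ddag : ℝ) := by
    have : (ddag:ℝ) < (d':ℝ) := by exact_mod_cast hlt
    linarith
  have h1 : 0 < τ * (expo Dmax m pP pU βIA K ystar - expo Dmax m pP pU βIA K ydag) *
      (∑ d ∈ Dset Dmax, (d : ℝ) * (ystar d * LP + (m d - ystar d) * LU)) :=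
    mul_pos (mul_pos hτ0 (by linarith)) hS
  have h2 : 0 ≤ ε * τ * ((d' : ℝ) - (ddag : ℝ)) * expo Dmax m pP pU βIA K ydag * (LU - LP) := by
    have := mul_nonneg (mul_nonneg (mul_nonneg (mul_nonneg hε0.le hτ0.le) hdd.le) he2)
      (by linarith : (0:ℝ) ≤ LU - LP)
    exact this
  linarith [hiden]
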